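/- The centered staggered-grid finite difference formula ∂u/∂x(x+Δx/2) ≈ (1225/(1024Δx))·[(u(x+Δx)−u(x)) − (u(x+2Δx)−u(x−Δx))/15 + (u(x+3Δx)−u(x−2Δx))/125 − (u(x+4Δx)−u(x−3Δx))/1715] is accurate to 8th order: for a smooth (C^9) function u, the difference between the formula and u'(x+Δx/2) is O(Δx^8) as Δx → 0. -/

import Mathlib

open Asymptotics Filter Topology Set

set_option maxHeartbeats 2000000

private lemma iterWithin_eq {f : ℝ → ℝ} {n : ℕ} (hf : ContDiff ℝ (n : ℕ) f) {m : ℕ} (hm : m ≤ n)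
    {y : ℝ} (hy : y ∈ Icc (0:ℝ) 1) :
    iteratedDerivWithin m f (Icc (0:ℝ) 1) y = iteratedDeriv m f y := by
  have H : HasFTaylorSeriesUpTo (n : ℕ∞) f (ftaylorSeries ℝ f) :=
    contDiff_iff_ftaylorSeries.mp (by exact_mod_cast hf)
  have H2 : HasFTaylorSeriesUpToOn (n : ℕ∞) f (ftaylorSeries ℝ f) (Icc (0:ℝ) 1) :=
    H.hasFTaylorSeriesUpToOn _
  have e := H2.eq_iteratedFDerivWithin_of_uniqueDiffOn (m := m) (by exact_mod_cast hm)
    (uniqueDiffOn_Icc one_pos) hy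
  rw [iteratedDerivWithin_eq_iteratedFDerivWithin, iteratedDeriv_eq_iteratedFDeriv, ← e]
  rfl

private lemma taylor_bigO {n : ℕ} {f : ℝ → ℝ} (hf : ContDiff ℝ ((n+1 : ℕ)) f) :
    (fun h : ℝ => f h - ∑ j ∈ Finset.range (n+1), h ^ j / (j.factorial : ℝ) * iteratedDeriv j f 0)
      =O[𝓝[>] (0:ℝ)] fun h => h ^ (n+1) := by
  obtain ⟨C, hC⟩ := exists_taylor_mean_remainder_bound (a := 0) (b := 1) zero_le_one
    (by exact_mod_cast hf.contDiffOn)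
  rw [isBigO_iff]
  refine ⟨|C|, ?_⟩
  filter_upwards [Ioc_mem_nhdsGT_of_mem (by constructor <;> norm_num : (0:ℝ) ∈ Ico (0:ℝ) 1)]
    with h hh
  have hmem : h ∈ Icc (0:ℝ) 1 := ⟨hh.1.le, hh.2⟩
  have hb := hC h hmem
  have ht : taylorWithinEval f n (Icc (0:ℝ) 1) 0 h
      = ∑ j ∈ Finset.range (n+1), h ^ j / (j.factorial : ℝ) * iteratedDeriv j f 0 := by
    rw [taylor_within_apply]
    refine Finset.sum_congr rfl fun k hk => ?_
    rw [iterWithin_eq hf ((by have := Finset.mem_range.mp hk; omega : k ≤ n + 1)) (left_mem_Icc.mpr zero_le_one)]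
    rw [smul_eq_mul]
    ring
  rw [ht, sub_zero] at hb
  calc ‖f h - ∑ j ∈ Finset.range (n+1), h ^ j / (j.factorial : ℝ) * iteratedDeriv j f 0‖
      ≤ C * h ^ (n+1) := hb
    _ ≤ |C| * h ^ (n+1) :=
        mul_le_mul_of_nonneg_right (le_abs_self C) (pow_nonneg hh.1.le _)
    _ = |C| * ‖h ^ (n+1)‖ := by
        rw [Real.norm_eq_abs, abs_of_nonneg (pow_nonneg hh.1.le _)]

/-- The 8th-order staggered-grid first-derivative formula at the half point. -/
theorem staggered_first_derivative_eighth_order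
    (u : ℝ → ℝ) (x : ℝ) (hu : ContDiff ℝ 9 u) :
    (fun Δx : ℝ =>
        (1225 / (1024 * Δx)) *
          ((u (x + Δx) - u x) - (u (x + 2 * Δx) - u (x - Δx)) / 15
            + (u (x + 3 * Δx) - u (x - 2 * Δx)) / 125
            - (u (x + 4 * Δx) - u (x - 3 * Δx)) / 1715)
          - deriv u (x + Δx / 2))
      =O[𝓝[>] (0 : ℝ)] fun Δx : ℝ => Δx ^ 8 := by
  -- notation
  set d : ℕ → ℝ := fun j => iteratedDeriv j u x with hd
  -- Taylor polynomials of h ↦ u (x + k*h)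
  set T : ℝ → ℝ → ℝ := fun k h => ∑ j ∈ Finset.range 9,
    h ^ j / (j.factorial : ℝ) * (k ^ j * d j) with hT
  set TD : ℝ → ℝ := fun h => ∑ j ∈ Finset.range 8,
    h ^ j / (j.factorial : ℝ) * ((1/2) ^ j * d (j+1)) with hTD
  have hshift : ContDiff ℝ (9 : ℕ) (fun t : ℝ => u (x + t)) := by
    have : ContDiff ℝ (9 : ℕ) u := by exact_mod_cast hu
    exact this.comp (contDiff_const.add contDiff_id)
  have hcomp : ∀ k : ℝ, ContDiff ℝ (9 : ℕ) (fun h : ℝ => u (x + k * h)) := by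
    intro k
    exact hshift.comp (contDiff_const.mul contDiff_id)
  -- iterated derivatives of the composed functions
  have hkey : ∀ (k : ℝ) (j : ℕ), j ≤ 9 → iteratedDeriv j (fun h : ℝ => u (x + k * h)) 0
      = k ^ j * d j := by
    intro k j hj
    have h1 : (fun h : ℝ => u (x + k * h)) = (fun h : ℝ => (fun t => u (x + t)) (k * h)) := rfl
    rw [h1, iteratedDeriv_comp_const_mul (hshift.of_le (by exact_mod_cast hj)) k]
    simp [iteratedDeriv_comp_const_add, hd]
  -- big-O for each evaluation point
  have hbig : ∀ k : ℝ, (fun h : ℝ => u (x + k * h) - T k h) =O[𝓝[>] (0:ℝ)]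
      fun h => h ^ 9 := by
    intro k
    refine (taylor_bigO (n := 8) (f := fun h : ℝ => u (x + k * h))
      (by exact_mod_cast hcomp k)).congr_left fun h => ?_
    have : (∑ j ∈ Finset.range 9, h ^ j / (j.factorial : ℝ)
        * iteratedDeriv j (fun h : ℝ => u (x + k * h)) 0) = T k h := by
      refine Finset.sum_congr rfl fun j hj => ?_
      rw [hkey k j (by have := Finset.mem_range.mp hj; omega)]
    rw [this]
  -- big-O for the derivative term
  have hderiv : ContDiff ℝ (8 : ℕ) (deriv u) := by
    have := (contDiff_succ_iff_deriv (n := 8) (f := u)).mp (by exact_mod_cast hu)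
    exact_mod_cast this.2.2
  have hdshift : ContDiff ℝ (8 : ℕ) (fun t : ℝ => deriv u (x + t)) :=
    hderiv.comp (contDiff_const.add contDiff_id)
  have hkeyD : ∀ j : ℕ, j ≤ 8 → iteratedDeriv j (fun h : ℝ => deriv u (x + (1/2) * h)) 0
      = (1/2) ^ j * d (j+1) := by
    intro j hj
    have h1 : (fun h : ℝ => deriv u (x + (1/2) * h))
        = (fun h : ℝ => (fun t => deriv u (x + t)) ((1/2) * h)) := rfl
    have hiter : iteratedDeriv j (deriv u) x = iteratedDeriv (j+1) u x := by
      rw [iteratedDeriv_succ']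
    rw [h1, iteratedDeriv_comp_const_mul (hdshift.of_le (by exact_mod_cast hj)) ((1:ℝ)/2)]
    simp [iteratedDeriv_comp_const_add, hd, hiter]
  have hbigD : (fun h : ℝ => deriv u (x + (1/2) * h) - TD h) =O[𝓝[>] (0:ℝ)]
      fun h => h ^ 8 := by
    refine (taylor_bigO (n := 7) (f := fun h : ℝ => deriv u (x + (1/2) * h))
      (by exact_mod_cast hdshift.comp (contDiff_const.mul contDiff_id))).congr_left
      fun h => ?_
    have : (∑ j ∈ Finset.range 8, h ^ j / (j.factorial : ℝ)
        * iteratedDeriv j (fun h : ℝ => deriv u (x + (1/2) * h)) 0) = TD h := by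
      refine Finset.sum_congr rfl fun j hj => ?_
      rw [hkeyD j (by have := Finset.mem_range.mp hj; omega)]
    rw [this]
  -- the key polynomial identity
  have hpoly : ∀ h : ℝ, h ≠ 0 →
      (1225 / (1024 * h)) * ((T 1 h - T 0 h) - (T 2 h - T (-1) h) / 15
        + (T 3 h - T (-2) h) / 125 - (T 4 h - T (-3) h) / 1715) = TD h := by
    intro h hh
    simp only [hT, hTD, Finset.sum_range_succ, Finset.sum_range_zero]
    norm_num [Nat.factorial]
    field_simp
    ring
  -- the remainder combination
  set R : ℝ → ℝ → ℝ := fun k h => u (x + k * h) - T k h with hR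
  have hRc : (fun h : ℝ => (R 1 h - R 0 h) - (R 2 h - R (-1) h) / 15
      + (R 3 h - R (-2) h) / 125 - (R 4 h - R (-3) h) / 1715) =O[𝓝[>] (0:ℝ)]
      fun h => h ^ 9 := by
    have := ((((hbig 1).sub (hbig 0)).sub (((hbig 2).sub (hbig (-1))).const_mul_left
      ((15:ℝ)⁻¹))).add (((hbig 3).sub (hbig (-2))).const_mul_left ((125:ℝ)⁻¹))).sub
      (((hbig 4).sub (hbig (-3))).const_mul_left ((1715:ℝ)⁻¹))
    exact this.congr_left fun h => by ring
  have h1 : (fun h : ℝ => (1225 / (1024 * h)) * ((R 1 h - R 0 h) - (R 2 h - R (-1) h) / 15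
      + (R 3 h - R (-2) h) / 125 - (R 4 h - R (-3) h) / 1715)) =O[𝓝[>] (0:ℝ)]
      fun h => h⁻¹ * h ^ 9 := by
    have hA : (fun h : ℝ => (1225 / (1024 * h))) =O[𝓝[>] (0:ℝ)] fun h => h⁻¹ := by
      rw [isBigO_iff]
      refine ⟨1225/1024, Eventually.of_forall fun h => ?_⟩
      rw [div_eq_mul_inv, mul_inv, ← mul_assoc]
      simp [norm_mul, abs_mul]
      apply le_of_eq
      ring
    exact hA.mul hRc
  have h2 : (fun h : ℝ => (1225 / (1024 * h)) * ((R 1 h - R 0 h) - (R 2 h - R (-1) h) / 15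
      + (R 3 h - R (-2) h) / 125 - (R 4 h - R (-3) h) / 1715)) =O[𝓝[>] (0:ℝ)]
      fun h => h ^ 8 := by
    refine h1.congr' EventuallyEq.rfl ?_
    filter_upwards [self_mem_nhdsWithin] with h hh
    have : h ≠ 0 := ne_of_gt hh
    field_simp
  have hfinal : (fun h : ℝ => (1225 / (1024 * h)) * ((R 1 h - R 0 h) - (R 2 h - R (-1) h) / 15
      + (R 3 h - R (-2) h) / 125 - (R 4 h - R (-3) h) / 1715)
      - (deriv u (x + (1/2) * h) - TD h)) =O[𝓝[>] (0:ℝ)] fun h => h ^ 8 :=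
    h2.sub hbigD
  refine hfinal.congr' ?_ EventuallyEq.rfl
  filter_upwards [self_mem_nhdsWithin] with h hh
  have hne : h ≠ 0 := ne_of_gt hh
  have harg : ∀ k : ℝ, x + k * h = x + k * h := fun _ => rfl
  have e1 : u (x + h) = u (x + 1 * h) := by norm_num
  have e2 : u (x - h) = u (x + (-1) * h) := by ring_nf
  have e3 : u (x - 2*h) = u (x + (-2) * h) := by ring_nf
  have e4 : u (x - 3*h) = u (x + (-3) * h) := by ring_nf
  have e5 : u x = u (x + 0 * h) := by norm_num
  have e6 : deriv u (x + h/2) = deriv u (x + (1/2) * h) := by ring_nf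
  simp only [hR]
  rw [← hpoly h hne]
  rw [e1, e2, e3, e4, e5, e6]
  ring
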